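/- Let n be an even positive integer. Then there exists a subset Γ of ZMod n × ZMod n of cardinality n − 1 such that the three maps (i,j) ↦ i, (i,j) ↦ j, and (i,j) ↦ j − i are each injective on Γ. (Equivalently, the cyclic Latin square of order n defined by L(i,j) = j − i + 1 has a partial transversal of length n − 1.) -/
import Mathlib


/-- For even `n > 0`, the cyclic Latin square of order `n` given by `L(i,j) = j - i + 1`
on `ZMod n` has a partial transversal of length `n - 1`: a set `Γ` of `n - 1` cells with
pairwise distinct rows, pairwise distinct columns and pairwise distinct entries. -/
theorem stmt_9 (n : ℕ) (hn : 0 < n) (heven : Even n) :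
    ∃ Γ : Set (ZMod n × ZMod n), Γ.ncard = n - 1 ∧
      Set.InjOn (fun p : ZMod n × ZMod n => p.1) Γ ∧
      Set.InjOn (fun p : ZMod n × ZMod n => p.2) Γ ∧
      Set.InjOn (fun p : ZMod n × ZMod n => p.2 - p.1) Γ := by
  classical
  haveI : NeZero n := ⟨hn.ne'⟩
  have hn2 : 2 ≤ n := Nat.le_of_dvd hn heven.two_dvd
  set m := n - 1 with hm
  have hm1 : 1 ≤ m := by omega
  haveI : NeZero m := ⟨by omega⟩
  have hmn : m < n := by omega
  have hodd : Odd m := Nat.Even.sub_odd hn heven odd_one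
  -- cast injectivity into ZMod n
  have castinj : ∀ a b : ℕ, a < n → b < n → (a : ZMod n) = (b : ZMod n) → a = b := by
    intro a b ha hb h
    have := congrArg ZMod.val h
    rwa [ZMod.val_cast_of_lt ha, ZMod.val_cast_of_lt hb] at this
  have castinjm : ∀ a b : ℕ, a < m → b < m → (a : ZMod m) = (b : ZMod m) → a = b := by
    intro a b ha hb h
    have := congrArg ZMod.val h
    rwa [ZMod.val_cast_of_lt ha, ZMod.val_cast_of_lt hb] at this
  -- injectivity of k ↦ 2k % m
  have colinj : ∀ a b : ℕ, a < m → b < m → 2 * a % m = 2 * b % m → a = b := by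
    intro a b ha hb h
    have h2 : ((2 * a : ℕ) : ZMod m) = ((2 * b : ℕ) : ZMod m) := by
      rw [← ZMod.natCast_mod (2 * a) m, ← ZMod.natCast_mod (2 * b) m, h]
    push_cast at h2
    have hu : IsUnit ((2 : ℕ) : ZMod m) := (ZMod.isUnit_iff_coprime 2 m).2 hodd.coprime_two_left
    have : (a : ZMod m) = (b : ZMod m) := hu.mul_left_cancel (by exact_mod_cast h2)
    exact castinjm a b ha hb this
  -- the "entry" function on naturals
  have diffeq : ∀ k : ℕ, k < m →
      ((2 * k % m : ℕ) : ZMod n) - (k : ZMod n)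
        = ((if 2 * k < m then k else k + 1 : ℕ) : ZMod n) := by
    intro k hk
    by_cases h2k : 2 * k < m
    · rw [if_pos h2k, Nat.mod_eq_of_lt h2k]
      push_cast
      ring
    · rw [if_neg h2k]
      have hle : m ≤ 2 * k := le_of_not_gt h2k
      have hmod : 2 * k % m = 2 * k - m := by
        rw [Nat.mod_eq_sub_mod hle, Nat.mod_eq_of_lt (by omega)]
      rw [hmod, Nat.cast_sub hle]
      have hmcast : ((m : ℕ) : ZMod n) = (n : ZMod n) - 1 := by
        rw [hm, Nat.cast_sub (by omega)]
        push_cast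
        ring
      rw [hmcast, ZMod.natCast_self]
      push_cast
      ring
  have gdlt : ∀ k : ℕ, k < m → (if 2 * k < m then k else k + 1) < n := by
    intro k hk
    split <;> omega
  have ginj : ∀ a b : ℕ, a < m → b < m →
      (if 2 * a < m then a else a + 1) = (if 2 * b < m then b else b + 1) → a = b := by
    intro a b ha hb h
    split at h <;> split at h <;> omega
  -- the transversal
  set f : Fin m → ZMod n × ZMod n :=
    fun k => (((k : ℕ) : ZMod n), ((2 * (k : ℕ) % m : ℕ) : ZMod n)) with hf
  have hfinj : Function.Injective f := by
    intro a b h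
    have h1 : (((a : ℕ) : ZMod n)) = ((b : ℕ) : ZMod n) := congrArg Prod.fst h
    exact Fin.ext (castinj _ _ (a.2.trans hmn) (b.2.trans hmn) h1)
  refine ⟨Set.range f, ?_, ?_, ?_, ?_⟩
  · rw [← Set.image_univ, Set.ncard_image_of_injective _ hfinj, Set.ncard_univ,
      Nat.card_eq_fintype_card, Fintype.card_fin]
  · rintro _ ⟨a, rfl⟩ _ ⟨b, rfl⟩ h
    simp only [hf] at h
    exact congrArg f (Fin.ext (castinj _ _ (a.2.trans hmn) (b.2.trans hmn) h))
  · rintro _ ⟨a, rfl⟩ _ ⟨b, rfl⟩ h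
    simp only [hf] at h
    have : 2 * (a : ℕ) % m = 2 * (b : ℕ) % m :=
      castinj _ _ ((Nat.mod_lt _ (by omega)).trans hmn) ((Nat.mod_lt _ (by omega)).trans hmn) h
    exact congrArg f (Fin.ext (colinj _ _ a.2 b.2 this))
  · rintro _ ⟨a, rfl⟩ _ ⟨b, rfl⟩ h
    simp only [hf] at h
    rw [diffeq _ a.2, diffeq _ b.2] at h
    have := castinj _ _ (gdlt _ a.2) (gdlt _ b.2) h
    exact congrArg f (Fin.ext (ginj _ _ a.2 b.2 this))
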